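/- For every integer n ≥ 2 and every real b with |b| > 1, the n×n symmetric matrix Λ(b) with entries b^{|i-j|} is indefinite, i.e., it has at least one positive and at least one negative eigenvalue. -/

import Mathlib

open Matrix

lemma negSemidef_of_eigenvalues_nonpos {n : Type*} [Fintype n] [DecidableEq n]
    {A : Matrix n n ℝ} (hA : A.IsHermitian) (h : ∀ i, hA.eigenvalues i ≤ 0) :
    (-A).PosSemidef := by
  have hd : (diagonal (fun i => -(hA.eigenvalues i)) : Matrix n n ℝ)
      = -diagonal (RCLike.ofReal ∘ hA.eigenvalues) := by
    ext i j
    by_cases hij : i = j <;> simp [diagonal_apply, hij, Function.comp]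
  have key : (-A) = (hA.eigenvectorUnitary : Matrix n n ℝ)
      * diagonal (fun i => -(hA.eigenvalues i))
      * (star (hA.eigenvectorUnitary : Matrix n n ℝ)) := by
    conv_lhs => rw [hA.spectral_theorem, Unitary.conjStarAlgAut_apply]
    rw [hd]
    rw [mul_neg, neg_mul]
  rw [key]
  refine (posSemidef_diagonal_iff.mpr ?_).mul_mul_conjTranspose_same _
  intro i
  simpa using h i

theorem stmt4 (n : ℕ) (hn : 2 ≤ n) (b : ℝ) (hb : 1 < |b|) :
    ∃ hH : (Matrix.of fun i j : Fin n => b ^ ((i : ℤ) - (j : ℤ)).natAbs).IsHermitian,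
      (∃ i, 0 < hH.eigenvalues i) ∧ (∃ j, hH.eigenvalues j < 0) := by
  set A : Matrix (Fin n) (Fin n) ℝ :=
    Matrix.of fun i j : Fin n => b ^ ((i : ℤ) - (j : ℤ)).natAbs with hA
  have hH : A.IsHermitian := by
    ext i j
    simp only [hA, Matrix.conjTranspose_apply, Matrix.of_apply, star_trivial]
    congr 1
    omega
  have hb2 : 1 < b ^ 2 := by nlinarith [sq_abs b, abs_nonneg b]
  obtain ⟨i0, hi0⟩ : ∃ i : Fin n, (i : ℕ) = 0 := ⟨⟨0, by omega⟩, rfl⟩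
  obtain ⟨i1, hi1⟩ : ∃ i : Fin n, (i : ℕ) = 1 := ⟨⟨1, by omega⟩, rfl⟩
  have e00 : ((i0 : ℤ) - (i0 : ℤ)).natAbs = 0 := by omega
  have e01 : ((i0 : ℤ) - (i1 : ℤ)).natAbs = 1 := by omega
  have e10 : ((i1 : ℤ) - (i0 : ℤ)).natAbs = 1 := by omega
  have e11 : ((i1 : ℤ) - (i1 : ℤ)).natAbs = 0 := by omega
  have hA00 : A i0 i0 = 1 := by simp [hA, e00]
  have hA01 : A i0 i1 = b := by simp [hA, e01]
  have hA10 : A i1 i0 = b := by simp [hA, e10]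
  have hA11 : A i1 i1 = 1 := by simp [hA, e11]
  have hne : i0 ≠ i1 := by intro h; rw [h] at hi0; omega
  refine ⟨hH, ?_, ?_⟩
  · by_contra hcon
    push_neg at hcon
    have hps := negSemidef_of_eigenvalues_nonpos hH hcon
    have h2 := hps.dotProduct_mulVec_nonneg (Pi.single i0 1)
    simp only [star_trivial, mulVec_single, single_dotProduct, one_mul, mul_one,
      Matrix.neg_apply, Pi.smul_apply, MulOpposite.smul_eq_mul_unop, MulOpposite.unop_op,
      col_apply] at h2
    rw [hA00] at h2
    linarith
  · by_contra hcon
    push_neg at hcon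
    have hps := hH.posSemidef_iff_eigenvalues_nonneg.mpr hcon
    have h2 := hps.dotProduct_mulVec_nonneg (Pi.single i0 1 + Pi.single i1 (-b))
    simp only [star_trivial, mulVec_add, mulVec_single, dotProduct_add, add_dotProduct,
      single_dotProduct, one_mul, mul_one, Pi.smul_apply, MulOpposite.smul_eq_mul_unop,
      MulOpposite.unop_op, col_apply] at h2
    rw [hA00, hA01, hA10, hA11] at h2
    nlinarith [h2]
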